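/- arXiv:0902.4877 — 2 statements merged into one kernel-verified Lean document; each statement's English description precedes it below -/
import Mathlib

section
/- (Choi's theorem) Let d ≥ 1 and let Φ be a Hermiticity-preserving linear map on the d×d complex matrices. Then Φ is completely positive (i.e., k-positive for every positive integer k) if and only if its Choi matrix C_Φ is positive semidefinite. -/
open Matrix Kronecker
open scoped ComplexOrder

noncomputable section

abbrev Mat (d : ℕ) := Matrix (Fin d) (Fin d) ℂ

abbrev MatMap (d : ℕ) := Mat d →ₗ[ℂ] Mat d

abbrev Mat2 (d : ℕ) := Matrix (Fin d × Fin d) (Fin d × Fin d) ℂ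

/-- The blockwise action of `id_I ⊗ Φ` on matrices indexed by `I × Fin d`:
`((id ⊗ Φ) M)((i,a),(j,b))` is the `(a,b)` entry of `Φ` applied to the `(i,j)` block of `M`. -/
def tensId {d : ℕ} (I : Type) (Φ : Mat d → Mat d)
    (M : Matrix (I × Fin d) (I × Fin d) ℂ) : Matrix (I × Fin d) (I × Fin d) ℂ :=
  Matrix.of fun p q => Φ (Matrix.of fun a b => M (p.1, a) (q.1, b)) p.2 q.2

/-- `Φ` is `k`-positive: `id_{Fin k} ⊗ Φ` sends PSD matrices to PSD matrices. -/
def kPositive (d k : ℕ) (Φ : Mat d → Mat d) : Prop :=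
  ∀ M : Matrix (Fin k × Fin d) (Fin k × Fin d) ℂ,
    M.PosSemidef → (tensId (Fin k) Φ M).PosSemidef

/-- `Φ` is completely positive: `k`-positive for every positive integer `k`. -/
def CompletelyPositive (d : ℕ) (Φ : Mat d → Mat d) : Prop :=
  ∀ k : ℕ, 0 < k → kPositive d k Φ

/-- `Φ` is `k`-superpositive: a finite sum of maps `Ad_{a_i} : x ↦ aᵢ* x aᵢ`
with `rank aᵢ ≤ k`. -/
def kSuperpositive (d k : ℕ) (Φ : Mat d → Mat d) : Prop :=
  ∃ (n : ℕ) (a : Fin n → Mat d),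
    (∀ i, (a i).rank ≤ k) ∧ ∀ x, Φ x = ∑ i, (a i)ᴴ * x * a i

/-- The Choi matrix of `Φ`: `C_Φ((i,a),(j,b)) = Φ(e_{ij})(a,b)`. -/
def choi {d : ℕ} (Φ : Mat d → Mat d) : Mat2 d :=
  Matrix.of fun p q => Φ (Matrix.single p.1 q.1 (1 : ℂ)) p.2 q.2

/-- `v` has Schmidt rank at most `k`: `v = ∑_{l<k} φ_l ⊗ ψ_l`. -/
def SchmidtRankLE (d k : ℕ) (v : Fin d × Fin d → ℂ) : Prop :=
  ∃ φ ψ : Fin k → Fin d → ℂ, v = fun p => ∑ l, φ l p.1 * ψ l p.2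

/-- `A` is `k`-block positive: Hermitian and `⟨v, A v⟩ ≥ 0` for every `v` of
Schmidt rank at most `k`. -/
def kBlockPositive (d k : ℕ) (A : Mat2 d) : Prop :=
  A.IsHermitian ∧ ∀ v : Fin d × Fin d → ℂ, SchmidtRankLE d k v → 0 ≤ star v ⬝ᵥ A *ᵥ v

/-- `b` is `k`-separable: a finite sum of rank-one matrices `v v*` with `v` of
Schmidt rank at most `k`. -/
def kSeparable (d k : ℕ) (b : Mat2 d) : Prop :=
  ∃ (n : ℕ) (v : Fin n → (Fin d × Fin d → ℂ)),
    (∀ i, SchmidtRankLE d k (v i)) ∧ b = ∑ i, Matrix.vecMulVec (v i) (star (v i))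

/-- `Φ` preserves Hermiticity. -/
def HermPreserving (d : ℕ) (Φ : Mat d → Mat d) : Prop :=
  ∀ x : Mat d, x.IsHermitian → (Φ x).IsHermitian

/-- The map `Ad_a : x ↦ a* x a`. -/
def adFun {d : ℕ} (a : Mat d) : Mat d → Mat d := fun x => aᴴ * x * a

/-- Elementary tensor of two vectors: `(φ ⊗ ψ)(i,a) = φ(i)·ψ(a)`. -/
def tensorVec {d : ℕ} (φ ψ : Fin d → ℂ) : Fin d × Fin d → ℂ := fun p => φ p.1 * ψ p.2

/-- The unnormalized maximally entangled vector `ψ₊ = ∑ᵢ eᵢ ⊗ eᵢ`. -/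
def psiPlus (d : ℕ) : Fin d × Fin d → ℂ := fun p => if p.1 = p.2 then 1 else 0

/-- `P₊ = ψ₊ ψ₊*`. -/
def Pplus (d : ℕ) : Mat2 d := Matrix.vecMulVec (psiPlus d) (star (psiPlus d))

/-- The transpose, as a linear map on matrices. -/
def transLM (d : ℕ) : MatMap d where
  toFun x := xᵀ
  map_add' x y := by simp
  map_smul' c x := by simp

/- ## Auxiliary lemmas -/

lemma apply_eq_sum {d : ℕ} (Φ : MatMap d) (x : Mat d) (a b : Fin d) :
    Φ x a b = ∑ i, ∑ j, x i j * choi ⇑Φ (i, a) (j, b) := by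
  have hx : Φ x = ∑ i, ∑ j, x i j • Φ (Matrix.single i j (1 : ℂ)) := by
    conv_lhs => rw [Matrix.matrix_eq_sum_single x]
    rw [map_sum]
    refine Finset.sum_congr rfl fun i _ => ?_
    rw [map_sum]
    refine Finset.sum_congr rfl fun j _ => ?_
    rw [← _root_.map_smul, Matrix.smul_single, smul_eq_mul, mul_one]
  rw [hx]
  simp [Matrix.sum_apply, choi]

/-- `W B r = 1_k ⊗ (reshape of row r of B)`. -/
def Wmat {d : ℕ} (k : ℕ) (B : Mat2 d) (r : Fin d × Fin d) :
    Matrix (Fin k × Fin d) (Fin k × Fin d) ℂ :=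
  Matrix.of fun p q => if p.1 = q.1 then B r (p.2, q.2) else 0

lemma sum_reorder {α β γ : Type*} [Fintype α] [Fintype β] [Fintype γ]
    (M : α → β → ℂ) (c : γ → α → ℂ) (b : γ → β → ℂ) :
    ∑ m, ∑ n, M m n * ∑ r, c r m * b r n
      = ∑ r, ∑ m, ∑ n, c r m * (M m n * b r n) := by
  simp only [Finset.mul_sum]
  calc ∑ m, ∑ n, ∑ r, M m n * (c r m * b r n)
      = ∑ m, ∑ r, ∑ n, M m n * (c r m * b r n) :=
        Finset.sum_congr rfl fun m _ => Finset.sum_comm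
    _ = ∑ r, ∑ m, ∑ n, M m n * (c r m * b r n) := Finset.sum_comm
    _ = ∑ r, ∑ m, ∑ n, c r m * (M m n * b r n) :=
        Finset.sum_congr rfl fun r _ => Finset.sum_congr rfl fun m _ =>
          Finset.sum_congr rfl fun n _ => by ring

lemma WW_apply {d k : ℕ} (B : Mat2 d) (r : Fin d × Fin d)
    (M : Matrix (Fin k × Fin d) (Fin k × Fin d) ℂ) (i j : Fin k) (a b : Fin d) :
    ((Wmat k B r)ᴴ * M * Wmat k B r) (i, a) (j, b)
      = ∑ m, ∑ n, star (B r (m, a)) * (M (i, m) (j, n) * B r (n, b)) := by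
  simp only [Matrix.mul_apply, Matrix.conjTranspose_apply, Wmat, Matrix.of_apply,
    Fintype.sum_prod_type, apply_ite (star : ℂ → ℂ), star_zero, ite_mul, zero_mul,
    mul_ite, mul_zero, Finset.sum_ite_irrel, Finset.sum_const_zero,
    Finset.sum_ite_eq, Finset.sum_ite_eq', Finset.mem_univ, if_true]
  rw [Finset.sum_comm]
  refine Finset.sum_congr rfl fun m _ => ?_
  rw [Finset.sum_mul]
  refine Finset.sum_congr rfl fun n _ => by ring

lemma tensId_eq {d k : ℕ} (Φ : MatMap d) (B : Mat2 d) (hC : choi ⇑Φ = Bᴴ * B)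
    (M : Matrix (Fin k × Fin d) (Fin k × Fin d) ℂ) :
    tensId (Fin k) ⇑Φ M = ∑ r : Fin d × Fin d, (Wmat k B r)ᴴ * M * Wmat k B r := by
  ext ⟨i, a⟩ ⟨j, b⟩
  rw [Matrix.sum_apply]
  simp only [WW_apply]
  show Φ (Matrix.of fun a b => M (i, a) (j, b)) a b = _
  rw [apply_eq_sum]
  simp only [hC, Matrix.mul_apply, Matrix.conjTranspose_apply, Matrix.of_apply]
  exact sum_reorder (fun m n => M (i, m) (j, n))
    (fun r m => star (B r (m, a))) (fun r n => B r (n, b))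

lemma pplus_posSemidef (d : ℕ) : (Pplus d).PosSemidef := by
  refine Matrix.posSemidef_iff_dotProduct_mulVec.mpr ⟨?_, ?_⟩
  · ext p q
    simp only [Pplus, Matrix.conjTranspose_apply, Matrix.vecMulVec_apply, Pi.star_apply,
      star_mul', star_star]
    ring
  · intro x
    have h1 : (Pplus d) *ᵥ x = fun p => psiPlus d p * (star (psiPlus d) ⬝ᵥ x) := by
      funext p
      simp [Pplus, Matrix.mulVec, Matrix.vecMulVec_apply, dotProduct, Finset.mul_sum, mul_assoc]
    rw [h1]
    have h2 : star x ⬝ᵥ (fun p => psiPlus d p * (star (psiPlus d) ⬝ᵥ x))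
        = star (star (psiPlus d) ⬝ᵥ x) * (star (psiPlus d) ⬝ᵥ x) := by
      simp only [dotProduct, Pi.star_apply, star_sum, star_mul', star_star, Finset.sum_mul]
      refine Finset.sum_congr rfl fun p _ => by ring
    rw [h2]
    exact star_mul_self_nonneg _

/-- Choi's theorem: a Hermiticity-preserving map is completely positive iff
its Choi matrix is positive semidefinite. -/
theorem stmt2 (d : ℕ) (hd : 1 ≤ d) (Φ : MatMap d) (hΦ : HermPreserving d ⇑Φ) :
    CompletelyPositive d ⇑Φ ↔ (choi ⇑Φ).PosSemidef := by
  constructor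
  · intro h
    have hP := h d hd (Pplus d) (pplus_posSemidef d)
    have he : tensId (Fin d) ⇑Φ (Pplus d) = choi ⇑Φ := by
      ext ⟨i, a⟩ ⟨j, b⟩
      show Φ (Matrix.of fun a b => Pplus d (i, a) (j, b)) a b
        = Φ (Matrix.single i j (1 : ℂ)) a b
      have hb : (Matrix.of fun a b => Pplus d (i, a) (j, b))
          = Matrix.single i j (1 : ℂ) := by
        ext m n
        simp only [Matrix.of_apply, Pplus, Matrix.vecMulVec_apply, psiPlus, Pi.star_apply,
          Matrix.single]
        by_cases h1 : i = m <;> by_cases h2 : j = n <;> simp [h1, h2, eq_comm]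
      rw [hb]
    rwa [he] at hP
  · intro hC k hk M hM
    obtain ⟨B, hB⟩ : ∃ B : Mat2 d, choi ⇑Φ = Bᴴ * B := by
      open scoped MatrixOrder in exact CStarAlgebra.nonneg_iff_eq_star_mul_self.mp hC.nonneg
    rw [tensId_eq Φ B hB M]
    refine Finset.sum_induction _ _ (fun x y hx hy => hx.add hy) Matrix.PosSemidef.zero
      fun r _ => hM.conjTranspose_mul_mul_same _
end
end

section
/- Let d ≥ 1 and k ≥ 1, and let Φ be a Hermiticity-preserving linear map on the d×d complex matrices. Then Φ is k-positive if and only if Tr(C_Φ · C_Ψ) ≥ 0 for every k-superpositive linear map Ψ on d×d matrices, where C_Φ and C_Ψ denote Choi matrices. -/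
open Matrix Kronecker
open scoped ComplexOrder

noncomputable section

/-- Expansion of a linear map on matrices in terms of matrix units. -/
lemma phi_apply_eq {d : ℕ} (Φ : MatMap d) (x : Mat d) (a b : Fin d) :
    Φ x a b = ∑ i, ∑ j, x i j * Φ (single i j 1) a b := by
  conv_lhs => rw [matrix_eq_sum_single x]
  rw [map_sum]
  simp only [Matrix.sum_apply]
  refine Finset.sum_congr rfl fun i _ => ?_
  rw [map_sum]
  simp only [Matrix.sum_apply]
  refine Finset.sum_congr rfl fun j _ => ?_
  rw [show single i j (x i j) = x i j • single i j (1:ℂ) by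
    rw [Matrix.smul_single]; norm_num]
  rw [_root_.map_smul]
  simp [Matrix.smul_apply, smul_eq_mul]

/-- Herm-preserving linear maps commute with conjTranspose. -/
lemma phi_conjTranspose {d : ℕ} (Φ : MatMap d)
    (hΦ : ∀ x : Mat d, x.IsHermitian → (Φ x).IsHermitian) (x : Mat d) :
    Φ xᴴ = (Φ x)ᴴ := by
  have main : ∀ A B : Mat d, A.IsHermitian → B.IsHermitian →
      Φ ((A + Complex.I • B)ᴴ) = (Φ (A + Complex.I • B))ᴴ := by
    intro A B hA hB
    have h1 : (A + Complex.I • B)ᴴ = A - Complex.I • B := by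
      rw [conjTranspose_add, conjTranspose_smul, hA.eq, hB.eq]
      simp [Complex.star_def, Complex.conj_I, sub_eq_add_neg]
    rw [h1, map_sub, _root_.map_smul, map_add, _root_.map_smul, conjTranspose_add,
      conjTranspose_smul, (hΦ A hA).eq, (hΦ B hB).eq]
    simp [Complex.star_def, Complex.conj_I, sub_eq_add_neg]
  have hAh : ((2⁻¹ : ℂ) • (x + xᴴ)).IsHermitian := by
    unfold Matrix.IsHermitian
    ext i j
    simp [Matrix.conjTranspose_apply, Matrix.smul_apply, Matrix.add_apply, map_add, _root_.map_mul]
    ring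
  have hBh : ((-(Complex.I) * 2⁻¹ : ℂ) • (x - xᴴ)).IsHermitian := by
    unfold Matrix.IsHermitian
    ext i j
    simp [Matrix.conjTranspose_apply, Matrix.smul_apply, Matrix.sub_apply, map_add, _root_.map_mul,
      Complex.conj_I]
    ring
  have hx : x = (2⁻¹ : ℂ) • (x + xᴴ) + Complex.I • ((-(Complex.I) * 2⁻¹ : ℂ) • (x - xᴴ)) := by
    ext i j
    simp [Matrix.add_apply, Matrix.smul_apply, Matrix.sub_apply]
    ring_nf
    simp [Complex.I_sq]
    ring
  conv_lhs => rw [hx]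
  conv_rhs => rw [hx]
  exact main _ _ hAh hBh


lemma rank_le_of_decomp {d k : ℕ} (m : Mat d) (φ ψ : Fin k → Fin d → ℂ)
    (h : ∀ i j, m i j = ∑ l, φ l i * ψ l j) : m.rank ≤ k := by
  have : m = (Matrix.of fun i (l : Fin k) => φ l i) * (Matrix.of fun (l : Fin k) j => ψ l j) := by
    ext i j
    simp [Matrix.mul_apply, h]
  calc m.rank ≤ (Matrix.of fun i (l : Fin k) => φ l i).rank := by
        rw [this]; exact Matrix.rank_mul_le_left _ _
    _ ≤ Fintype.card (Fin k) := Matrix.rank_le_card_width _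
    _ = k := Fintype.card_fin k

lemma decomp_of_rank_le {d k : ℕ} (m : Mat d) (hr : m.rank ≤ k) :
    ∃ φ ψ : Fin k → Fin d → ℂ, ∀ i j, m i j = ∑ l, φ l i * ψ l j := by
  set R : Submodule ℂ (Fin d → ℂ) := LinearMap.range m.mulVecLin with hR
  have hfin : Module.finrank ℂ R = m.rank := rfl
  set r : ℕ := m.rank with hrdef
  let b : Module.Basis (Fin r) ℂ R := Module.Basis.reindex (Module.finBasis ℂ R) (finCongr hfin)
  have hcol : ∀ j : Fin d, (fun i => m i j) ∈ R := by
    intro j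
    exact ⟨Pi.single j 1, by ext i; simp [Matrix.mulVecLin_apply, Matrix.mulVec_single]⟩
  let col : Fin d → R := fun j => ⟨fun i => m i j, hcol j⟩
  have hrepr : ∀ j : Fin d, ∀ i : Fin d,
      m i j = ∑ l : Fin r, (b.repr (col j)) l * ((b l : Fin d → ℂ) i) := by
    intro j i
    have := b.sum_repr (col j)
    have h2 := congrArg (fun (v : R) => (v : Fin d → ℂ) i) this
    simp only [col] at h2
    rw [← h2]
    push_cast
    simp [Submodule.coe_sum, col]
  refine ⟨fun l => if h : (l : ℕ) < r then ((b ⟨l, h⟩ : R) : Fin d → ℂ) else 0,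
          fun l j => if h : (l : ℕ) < r then (b.repr (col j)) ⟨l, h⟩ else 0, ?_⟩
  intro i j
  rw [hrepr j i]
  let G : ℕ → ℂ := fun l =>
    if h : l < r then ((b ⟨l, h⟩ : R) : Fin d → ℂ) i * (b.repr (col j)) ⟨l, h⟩ else 0
  have step1 : ∑ l : Fin k, ((if h : (l:ℕ) < r then ((b ⟨l, h⟩ : R) : Fin d → ℂ) else 0) i
        * (if h : (l:ℕ) < r then (b.repr (col j)) ⟨l, h⟩ else 0)) = ∑ l : Fin k, G (l : ℕ) := by
    refine Finset.sum_congr rfl fun l _ => ?_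
    by_cases h : (l:ℕ) < r <;> simp [G, h]
  rw [step1, Fin.sum_univ_eq_sum_range G k,
    ← Finset.sum_subset (Finset.range_subset_range.2 hr)
      (fun l _ hl => dif_neg (by simpa using hl)),
    ← Fin.sum_univ_eq_sum_range G r]
  refine Finset.sum_congr rfl fun l _ => ?_
  simp [G, l.isLt]
  ring


lemma sum_reorder6 {α β γ δ ε ζ : Type} [Fintype α] [Fintype β] [Fintype γ] [Fintype δ]
    [Fintype ε] [Fintype ζ] (G : α → β → γ → δ → ε → ζ → ℂ) :
    (∑ l : α, ∑ a : β, ∑ m : γ, ∑ b : δ, ∑ i : ε, ∑ j : ζ, G l a m b i j)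
      = ∑ i : ε, ∑ a : β, ∑ j : ζ, ∑ b : δ, ∑ l : α, ∑ m : γ, G l a m b i j := by
  have e1 : (∑ z : α × β × γ × δ × ε × ζ,
      G z.1 z.2.1 z.2.2.1 z.2.2.2.1 z.2.2.2.2.1 z.2.2.2.2.2)
      = ∑ l : α, ∑ a : β, ∑ m : γ, ∑ b : δ, ∑ i : ε, ∑ j : ζ, G l a m b i j := by
    simp [Fintype.sum_prod_type]
  have e2 : (∑ z : ε × β × ζ × δ × α × γ,
      G z.2.2.2.2.1 z.2.1 z.2.2.2.2.2 z.2.2.2.1 z.1 z.2.2.1)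
      = ∑ i : ε, ∑ a : β, ∑ j : ζ, ∑ b : δ, ∑ l : α, ∑ m : γ, G l a m b i j := by
    simp [Fintype.sum_prod_type]
  rw [← e1, ← e2]
  exact Fintype.sum_bijective
    (fun z : ε × β × ζ × δ × α × γ => (z.2.2.2.2.1, z.2.1, z.2.2.2.2.2, z.2.2.2.1, z.1, z.2.2.1))
    (Equiv.mk
      (fun z : ε × β × ζ × δ × α × γ => (z.2.2.2.2.1, z.2.1, z.2.2.2.2.2, z.2.2.2.1, z.1, z.2.2.1))
      (fun z : α × β × γ × δ × ε × ζ => (z.2.2.2.2.1, z.2.1, z.2.2.2.2.2, z.2.2.2.1, z.1, z.2.2.1))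
      (by rintro ⟨i,a,j,b,l,m⟩; rfl) (by rintro ⟨l,a,m,b,i,j⟩; rfl)).bijective
    _ _ (fun z => rfl) |>.symm

lemma posSemidef_vecMulVec_star {n : Type} [Fintype n] [DecidableEq n] (w : n → ℂ) :
    (vecMulVec w (star w)).PosSemidef := by
  refine Matrix.PosSemidef.of_dotProduct_mulVec_nonneg ?_ ?_
  · ext p q
    simp [vecMulVec_apply, conjTranspose_apply, mul_comm]
  · intro x
    have h : star x ⬝ᵥ (vecMulVec w (star w)) *ᵥ x = star (star w ⬝ᵥ x) * (star w ⬝ᵥ x) := by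
      simp only [dotProduct, vecMulVec_apply, mulVec, Pi.star_apply, star_sum, star_mul']
      simp only [Finset.mul_sum, Finset.sum_mul, star_star]
      rw [Finset.sum_comm]
      refine Finset.sum_congr rfl fun p _ => Finset.sum_congr rfl fun q _ => ?_
      ring
    rw [h]
    exact star_mul_self_nonneg _

lemma phi_apply_eq' {d : ℕ} (Φ : MatMap d) (g : Fin d → Fin d → ℂ) (a b : Fin d) :
    Φ (Matrix.of g) a b = ∑ i, ∑ j, g i j * choi ⇑Φ (i,a) (j,b) := by
  rw [phi_apply_eq Φ (Matrix.of g) a b]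
  rfl

lemma key {d k : ℕ} (Φ : MatMap d) (w x : Fin k × Fin d → ℂ) :
    star x ⬝ᵥ (tensId (Fin k) ⇑Φ (vecMulVec w (star w))) *ᵥ x
      = star (fun q : Fin d × Fin d => ∑ m, star (w (m, q.1)) * x (m, q.2)) ⬝ᵥ
        choi ⇑Φ *ᵥ fun q : Fin d × Fin d => ∑ m, star (w (m, q.1)) * x (m, q.2) := by
  conv_lhs => simp only [dotProduct, mulVec, Pi.star_apply, Fintype.sum_prod_type, tensId,
    of_apply, vecMulVec_apply, phi_apply_eq', Finset.mul_sum, Finset.sum_mul]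
  conv_rhs => simp only [dotProduct, mulVec, Pi.star_apply, Fintype.sum_prod_type, star_sum,
    star_mul', star_star, Finset.mul_sum, Finset.sum_mul]
  rw [sum_reorder6 (fun l a m b i j => star (x (l,a)) *
    (w (l,i) * star (w (m,j)) * choi ⇑Φ (i,a) (j,b) * x (m,b)))]
  refine Finset.sum_congr rfl fun i _ => Finset.sum_congr rfl fun a _ =>
    Finset.sum_congr rfl fun j _ => Finset.sum_congr rfl fun b _ => ?_
  rw [Finset.sum_comm]
  refine Finset.sum_congr rfl fun m _ => Finset.sum_congr rfl fun l _ => ?_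
  ring

lemma adj_std_adj {d : ℕ} (a : Mat d) (s t α β : Fin d) :
    (aᴴ * single s t (1:ℂ) * a) α β = star (a s α) * a t β := by
  simp [Matrix.mul_apply, Matrix.conjTranspose_apply, Matrix.single, ite_and,
    Finset.sum_ite_eq, Finset.mul_sum, Finset.sum_mul, mul_comm, of_apply]

lemma trace_formula {d n : ℕ} (Φ Ψ : Mat d → Mat d) (a : Fin n → Mat d)
    (hΨ : ∀ x, Ψ x = ∑ i, (a i)ᴴ * x * a i) :
    (choi Φ * choi Ψ).trace
      = ∑ i, star (fun p : Fin d × Fin d => star (a i p.1 p.2)) ⬝ᵥ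
          choi Φ *ᵥ (fun p : Fin d × Fin d => star (a i p.1 p.2)) := by
  have hchoiΨ : ∀ q p : Fin d × Fin d, choi Ψ q p = ∑ i, star (a i q.1 q.2) * a i p.1 p.2 := by
    intro q p
    simp only [choi, of_apply, hΨ, Matrix.sum_apply, adj_std_adj]
  rw [Matrix.trace]
  simp only [Matrix.diag_apply, Matrix.mul_apply, hchoiΨ, dotProduct, mulVec, Pi.star_apply,
    star_star, Finset.mul_sum, Finset.sum_mul]
  calc ∑ p : Fin d × Fin d, ∑ q : Fin d × Fin d, ∑ i : Fin n,
        choi Φ p q * (star (a i q.1 q.2) * a i p.1 p.2)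
      = ∑ p : Fin d × Fin d, ∑ i : Fin n, ∑ q : Fin d × Fin d,
        choi Φ p q * (star (a i q.1 q.2) * a i p.1 p.2) :=
        Finset.sum_congr rfl fun p _ => Finset.sum_comm
    _ = ∑ i : Fin n, ∑ p : Fin d × Fin d, ∑ q : Fin d × Fin d,
        choi Φ p q * (star (a i q.1 q.2) * a i p.1 p.2) := Finset.sum_comm
    _ = _ := by
        refine Finset.sum_congr rfl fun i _ => Finset.sum_congr rfl fun p _ => ?_
        refine Finset.sum_congr rfl fun q _ => ?_
        ring

def adLM' {d : ℕ} (a : Mat d) : MatMap d where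
  toFun x := aᴴ * x * a
  map_add' x y := by simp [mul_add, add_mul]
  map_smul' c x := by simp [mul_smul_comm, smul_mul_assoc]

/-- a Hermiticity-preserving map `Φ` is `k`-positive iff
`Tr(C_Φ C_Ψ) ≥ 0` for every `k`-superpositive map `Ψ`. -/
theorem stmt8 (d k : ℕ) (hd : 1 ≤ d) (hk : 1 ≤ k) (Φ : MatMap d)
    (hΦ : HermPreserving d ⇑Φ) :
    kPositive d k ⇑Φ ↔
      ∀ Ψ : MatMap d, kSuperpositive d k ⇑Ψ → 0 ≤ (choi ⇑Φ * choi ⇑Ψ).trace := by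
  constructor
  · rintro hpos Ψ ⟨n, a, hrank, hΨ⟩
    rw [trace_formula ⇑Φ ⇑Ψ a hΨ]
    refine Finset.sum_nonneg fun i _ => ?_
    obtain ⟨φ, ψ, hdec⟩ := decomp_of_rank_le (a i) (hrank i)
    set w' : Fin k × Fin d → ℂ := fun p => φ p.1 p.2 with hw'
    set xv : Fin k × Fin d → ℂ := fun p => star (ψ p.1 p.2) with hxv
    have hM := hpos (vecMulVec w' (star w')) (posSemidef_vecMulVec_star w')
    have h0 := hM.dotProduct_mulVec_nonneg xv
    rw [key Φ w' xv] at h0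
    have hw : (fun p : Fin d × Fin d => star (a i p.1 p.2))
        = fun q : Fin d × Fin d => ∑ m, star (w' (m, q.1)) * xv (m, q.2) := by
      funext q
      rw [hdec q.1 q.2, star_sum]
      refine Finset.sum_congr rfl fun m _ => ?_
      simp only [hw', hxv, star_mul']
      try ring
    rw [hw]
    exact h0
  · intro htr M hM
    refine Matrix.PosSemidef.of_dotProduct_mulVec_nonneg ?_ ?_
    · show (tensId (Fin k) ⇑Φ M)ᴴ = _
      ext p q
      rw [conjTranspose_apply]
      show star (Φ (Matrix.of fun a b => M (q.1, a) (p.1, b)) q.2 p.2)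
          = Φ (Matrix.of fun a b => M (p.1, a) (q.1, b)) p.2 q.2
      have hB : (Matrix.of fun a b => M (q.1, a) (p.1, b))ᴴ
          = Matrix.of fun a b => M (p.1, a) (q.1, b) := by
        ext a b
        rw [conjTranspose_apply, of_apply, of_apply]
        have := congrFun (congrFun hM.1 (p.1, a)) (q.1, b)
        rw [conjTranspose_apply] at this
        exact this
      calc star (Φ (Matrix.of fun a b => M (q.1, a) (p.1, b)) q.2 p.2)
          = (Φ (Matrix.of fun a b => M (q.1, a) (p.1, b)))ᴴ p.2 q.2 := rfl
        _ = Φ ((Matrix.of fun a b => M (q.1, a) (p.1, b))ᴴ) p.2 q.2 := by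
            rw [phi_conjTranspose Φ hΦ]
        _ = _ := by rw [hB]
    · intro x
      obtain ⟨S, hS, hSherm⟩ : ∃ S : Matrix (Fin k × Fin d) (Fin k × Fin d) ℂ,
          S * S = M ∧ S.IsHermitian := by
        open scoped MatrixOrder in
        exact ⟨CFC.sqrt M, CFC.sqrt_mul_sqrt_self M hM.nonneg, (CFC.sqrt_nonneg M).posSemidef.1⟩
      set col : (Fin k × Fin d) → (Fin k × Fin d) → ℂ := fun r p => S p r with hcol
      have hMdec : M = ∑ r, vecMulVec (col r) (star (col r)) := by
        ext p q
        rw [← hS, mul_apply]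
        simp only [Matrix.sum_apply, vecMulVec_apply, Pi.star_apply, hcol]
        refine Finset.sum_congr rfl fun r _ => ?_
        congr 1
        have := congrFun (congrFun hSherm.eq r) q
        rw [conjTranspose_apply] at this
        exact this.symm
      have hT : tensId (Fin k) ⇑Φ M
          = ∑ r, tensId (Fin k) ⇑Φ (vecMulVec (col r) (star (col r))) := by
        ext p q
        show Φ (Matrix.of fun a b => M (p.1, a) (q.1, b)) p.2 q.2 = _
        have hblk : (Matrix.of fun a b => M (p.1, a) (q.1, b))
            = ∑ r, Matrix.of fun a b =>
                (vecMulVec (col r) (star (col r))) (p.1, a) (q.1, b) := by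
          ext a b
          rw [hMdec]
          simp [Matrix.sum_apply]
        rw [hblk, map_sum]
        simp only [Matrix.sum_apply]
        rfl
      have hsplit : star x ⬝ᵥ tensId (Fin k) ⇑Φ M *ᵥ x
          = ∑ r, star x ⬝ᵥ tensId (Fin k) ⇑Φ (vecMulVec (col r) (star (col r))) *ᵥ x := by
        rw [hT]
        have h1 : (∑ r, tensId (Fin k) ⇑Φ (vecMulVec (col r) (star (col r)))) *ᵥ x
            = ∑ r, tensId (Fin k) ⇑Φ (vecMulVec (col r) (star (col r))) *ᵥ x := by
          ext p
          simp only [mulVec, dotProduct, Matrix.sum_apply, Finset.sum_mul, Finset.sum_apply]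
          exact Finset.sum_comm
        rw [h1]
        simp only [dotProduct, Finset.sum_apply, Finset.mul_sum]
        exact Finset.sum_comm
      rw [hsplit]
      refine Finset.sum_nonneg fun r _ => ?_
      rw [key Φ (col r) x]
      set y : Fin d × Fin d → ℂ := fun q => ∑ m, star (col r (m, q.1)) * x (m, q.2) with hy
      set ar : Mat d := Matrix.of fun i j => star (y (i, j)) with har
      have hrank : ar.rank ≤ k := by
        refine rank_le_of_decomp ar (fun m i => col r (m, i)) (fun m j => star (x (m, j))) ?_
        intro i j
        simp only [har, of_apply, hy, star_sum, star_mul', star_star]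
        try exact Finset.sum_congr rfl fun m _ => by ring
      have hsup : kSuperpositive d k ⇑(adLM' ar) := by
        refine ⟨1, fun _ => ar, fun _ => hrank, fun z => ?_⟩
        simp [adLM']
      have h0 := htr (adLM' ar) hsup
      rw [trace_formula ⇑Φ ⇑(adLM' ar) (fun _ : Fin 1 => ar)
        (fun z => by simp [adLM'])] at h0
      rw [Fin.sum_univ_one] at h0
      have hyw : (fun p : Fin d × Fin d => star (ar p.1 p.2)) = y := by
        funext p
        simp [har]
      rw [hyw] at h0
      exact h0
end
end
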